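/- arXiv:2003.04436 — 2 statements merged into one kernel-verified Lean document; each statement's English description precedes it below -/
import Mathlib

section
/- Let (S,𝒮) be a measurable space and L > 0. Suppose F : S×ℝⁿ → ℝⁿ is 𝒮⊗𝓑(ℝⁿ)-measurable and for each a ∈ S the map F(a,·) belongs to H_L, i.e. F(a,·) is a homeomorphism of ℝⁿ satisfying L^{−1}|x−y| ≤ |F(a,x)−F(a,y)| ≤ L|x−y| for all x,y ∈ ℝⁿ. Then the map F^{−1} : S×ℝⁿ → ℝⁿ, (a,x) ↦ (F(a,·))^{−1}(x), is 𝒮⊗𝓑(ℝⁿ)/𝓑(ℝⁿ)-measurable. -/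
open MeasureTheory

/-- `ℝⁿ` as a Euclidean space. -/
abbrev Rn (n : ℕ) : Type := EuclideanSpace ℝ (Fin n)

/-- If `F : S × ℝⁿ → ℝⁿ` is `𝒮 ⊗ 𝓑(ℝⁿ)`-measurable and each `F(a,·)` is a homeomorphism of
`ℝⁿ` satisfying `L⁻¹|x−y| ≤ |F(a,x)−F(a,y)| ≤ L|x−y|`, then
`(a,x) ↦ (F(a,·))⁻¹(x)` is `𝒮 ⊗ 𝓑(ℝⁿ)`-measurable. -/
theorem measurable_inverse_of_biLipschitz_family
    {S : Type*} [MeasurableSpace S] (n : ℕ) (L : ℝ) (hL : 0 < L)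
    (F : S → Rn n → Rn n)
    (hF : Measurable (fun q : S × Rn n => F q.1 q.2))
    (hbij : ∀ a : S, Function.Bijective (F a))
    (hlow : ∀ (a : S) (x y : Rn n), L⁻¹ * dist x y ≤ dist (F a x) (F a y))
    (hup : ∀ (a : S) (x y : Rn n), dist (F a x) (F a y) ≤ L * dist x y) :
    Measurable (fun q : S × Rn n => Function.invFun (F q.1) q.2) := by
  classical
  -- set G := inverse
  set G : S × Rn n → Rn n := fun q => Function.invFun (F q.1) q.2 with hG
  have hFG : ∀ q : S × Rn n, F q.1 (G q) = q.2 := fun q =>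
    Function.rightInverse_invFun (hbij q.1).2 q.2
  -- countable dense sequence in Rn n
  obtain ⟨d, hd⟩ : ∃ d : ℕ → Rn n, DenseRange d :=
    ⟨TopologicalSpace.denseSeq (Rn n), TopologicalSpace.denseRange_denseSeq _⟩
  -- the approximating predicate
  have hex : ∀ k : ℕ, ∀ q : S × Rn n, ∃ i : ℕ, dist (F q.1 (d i)) q.2 < 1 / (k + 1) := by
    intro k q
    have hpos : (0 : ℝ) < 1 / (k + 1) := by positivity
    obtain ⟨i, hi⟩ := Metric.denseRange_iff.1 hd (G q) ((1 / (k + 1)) / L) (by positivity)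
    refine ⟨i, ?_⟩
    have := hup q.1 (d i) (G q)
    rw [hFG q] at this
    calc dist (F q.1 (d i)) q.2 ≤ L * dist (d i) (G q) := this
      _ < L * ((1 / (k + 1)) / L) := by
          apply mul_lt_mul_of_pos_left _ hL
          rwa [dist_comm]
      _ = 1 / (k + 1) := by field_simp
  -- the approximating functions
  set g : ℕ → S × Rn n → Rn n := fun k q => d (Nat.find (hex k q)) with hg
  have hgm : ∀ k, Measurable (g k) := by
    intro k
    apply Measurable.comp (measurable_from_top (f := d))
    apply measurable_find
    intro i
    have : Measurable fun q : S × Rn n => dist (F q.1 (d i)) q.2 := by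
      apply Measurable.dist _ measurable_snd
      exact hF.comp (measurable_fst.prodMk measurable_const)
    exact measurableSet_lt this measurable_const
  -- pointwise convergence g k q → G q
  have htend : ∀ q : S × Rn n, Filter.Tendsto (fun k => g k q) Filter.atTop (nhds (G q)) := by
    intro q
    rw [tendsto_iff_dist_tendsto_zero]
    have hb : ∀ k : ℕ, dist (g k q) (G q) ≤ L * (1 / (k + 1)) := by
      intro k
      have h1 := hlow q.1 (g k q) (G q)
      rw [hFG q] at h1
      have h2 : dist (F q.1 (g k q)) q.2 < 1 / (k + 1) := Nat.find_spec (hex k q)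
      have : L⁻¹ * dist (g k q) (G q) ≤ 1 / (k + 1) := h1.trans h2.le
      calc dist (g k q) (G q) = L * (L⁻¹ * dist (g k q) (G q)) := by field_simp
        _ ≤ L * (1 / (k + 1)) := mul_le_mul_of_nonneg_left this hL.le
    have hlim : Filter.Tendsto (fun k : ℕ => L * (1 / (k + 1) : ℝ)) Filter.atTop (nhds 0) := by
      have := tendsto_one_div_add_atTop_nhds_zero_nat (𝕜 := ℝ)
      simpa using (this.const_mul L)
    exact squeeze_zero (fun k => dist_nonneg) hb hlim
  exact measurable_of_tendsto_metrizable hgm (tendsto_pi_nhds.2 htend)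
end

section
/- Let L > 0 and equip H_L with d(f,g) := sup_{x∈ℝⁿ} |f(x)−g(x)|/(1+|x|). Then: (a) d is a finite metric on H_L; (b) the inversion map Inv : H_L → H_L, f ↦ f^{−1}, is well defined (i.e. f ∈ H_L implies f^{−1} ∈ H_L) and continuous with respect to d; in fact, for all f, g ∈ H_L, d(f^{−1}, g^{−1}) ≤ L·(1 + L + L|g(0)|)·d(f,g). -/
/-- The set `H_L` of homeomorphisms `f : ℝⁿ → ℝⁿ` with
`L⁻¹|x−y| ≤ |f(x)−f(y)| ≤ L|x−y|` for all `x, y`. -/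
def HL (n : ℕ) (L : ℝ) : Set (Rn n → Rn n) :=
  {f | Function.Bijective f ∧
    ∀ x y : Rn n, L⁻¹ * dist x y ≤ dist (f x) (f y) ∧ dist (f x) (f y) ≤ L * dist x y}

/-- `d(f,g) := sup_x |f(x) − g(x)|/(1+|x|)`. -/
noncomputable def dHL {n : ℕ} (f g : Rn n → Rn n) : ℝ :=
  ⨆ x : Rn n, dist (f x) (g x) / (1 + ‖x‖)

lemma HL_bdd {n : ℕ} {L : ℝ} (hL : 0 < L) {f g : Rn n → Rn n}
    (hf : f ∈ HL n L) (hg : g ∈ HL n L) :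
    BddAbove (Set.range fun x : Rn n => dist (f x) (g x) / (1 + ‖x‖)) := by
  refine ⟨2 * L + dist (f 0) (g 0), ?_⟩
  rintro _ ⟨x, rfl⟩
  have hx : (0:ℝ) < 1 + ‖x‖ := by positivity
  rw [div_le_iff₀ hx]
  have h1 : dist (f x) (g x) ≤ dist (f x) (f 0) + dist (f 0) (g 0) + dist (g 0) (g x) :=
    dist_triangle4 _ _ _ _
  have h2 : dist (f x) (f 0) ≤ L * ‖x‖ := by
    have := (hf.2 x 0).2; rwa [dist_zero_right] at this
  have h3 : dist (g 0) (g x) ≤ L * ‖x‖ := by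
    have := (hg.2 0 x).2; rwa [dist_zero_left] at this
  nlinarith [norm_nonneg x, dist_nonneg (x := f 0) (y := g 0), hL.le]

lemma HL_le_dHL {n : ℕ} {L : ℝ} (hL : 0 < L) {f g : Rn n → Rn n}
    (hf : f ∈ HL n L) (hg : g ∈ HL n L) (x : Rn n) :
    dist (f x) (g x) / (1 + ‖x‖) ≤ dHL f g :=
  le_ciSup (HL_bdd hL hf hg) x

lemma HL_dHL_nonneg {n : ℕ} {L : ℝ} (hL : 0 < L) {f g : Rn n → Rn n}
    (hf : f ∈ HL n L) (hg : g ∈ HL n L) : 0 ≤ dHL f g :=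
  le_trans (by positivity) (HL_le_dHL hL hf hg 0)

lemma HL_inv_mem {n : ℕ} {L : ℝ} (hL : 0 < L) {f : Rn n → Rn n} (hf : f ∈ HL n L) :
    Function.invFun f ∈ HL n L := by
  have hleft : Function.LeftInverse (Function.invFun f) f :=
    Function.leftInverse_invFun hf.1.1
  have hright : Function.RightInverse (Function.invFun f) f :=
    Function.rightInverse_invFun hf.1.2
  refine ⟨⟨hright.injective, hleft.surjective⟩, fun x y => ?_⟩
  have h := hf.2 (Function.invFun f x) (Function.invFun f y)
  rw [hright x, hright y] at h
  constructor
  · rw [inv_mul_le_iff₀ hL]; exact h.2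
  · calc dist (Function.invFun f x) (Function.invFun f y)
        = L * (L⁻¹ * dist (Function.invFun f x) (Function.invFun f y)) := by
          field_simp
      _ ≤ L * dist x y := mul_le_mul_of_nonneg_left h.1 hL.le

/-- `d(f,g) = sup_x |f(x)−g(x)|/(1+|x|)` is a finite metric on `H_L`, the inversion map
`Inv : H_L → H_L`, `f ↦ f⁻¹` is well defined, and it is continuous for `d`; quantitatively,
`d(f⁻¹, g⁻¹) ≤ L(1 + L + L|g(0)|) d(f,g)` for all `f, g ∈ H_L`. -/
theorem HL_metric_and_inversion_continuous (n : ℕ) (L : ℝ) (hL : 0 < L) :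
    -- (a) `d` is a finite metric on `H_L`
    (∀ f ∈ HL n L, ∀ g ∈ HL n L,
      BddAbove (Set.range fun x : Rn n => dist (f x) (g x) / (1 + ‖x‖)) ∧
      0 ≤ dHL f g ∧ dHL f g = dHL g f ∧ (dHL f g = 0 ↔ f = g) ∧
      ∀ h ∈ HL n L, dHL f g ≤ dHL f h + dHL h g) ∧
    -- (b) inversion is well defined on `H_L` ...
    (∀ f ∈ HL n L, Function.invFun f ∈ HL n L) ∧
    -- ... and continuous, with the quantitative bound
    (∀ f ∈ HL n L, ∀ g ∈ HL n L,
      dHL (Function.invFun f) (Function.invFun g) ≤ L * (1 + L + L * ‖g 0‖) * dHL f g) := by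
  refine ⟨?_, fun f hf => HL_inv_mem hL hf, ?_⟩
  · intro f hf g hg
    refine ⟨HL_bdd hL hf hg, HL_dHL_nonneg hL hf hg, ?_, ?_, ?_⟩
    · unfold dHL
      exact iSup_congr fun x => by rw [dist_comm]
    · constructor
      · intro h0
        funext x
        have h1 : dist (f x) (g x) / (1 + ‖x‖) ≤ 0 := h0 ▸ HL_le_dHL hL hf hg x
        have h2 : (0:ℝ) ≤ dist (f x) (g x) / (1 + ‖x‖) := by positivity
        have h3 : dist (f x) (g x) / (1 + ‖x‖) = 0 := le_antisymm h1 h2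
        have hx : (0:ℝ) < 1 + ‖x‖ := by positivity
        field_simp at h3
        exact dist_eq_zero.mp (h3.trans (mul_zero _))
      · rintro rfl
        simp [dHL]
    · intro h hh
      refine ciSup_le fun x => ?_
      have hx : (0:ℝ) < 1 + ‖x‖ := by positivity
      calc dist (f x) (g x) / (1 + ‖x‖)
          ≤ (dist (f x) (h x) + dist (h x) (g x)) / (1 + ‖x‖) := by
            gcongr; exact dist_triangle _ _ _
        _ = dist (f x) (h x) / (1 + ‖x‖) + dist (h x) (g x) / (1 + ‖x‖) := add_div _ _ _
        _ ≤ dHL f h + dHL h g :=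
            add_le_add (HL_le_dHL hL hf hh x) (HL_le_dHL hL hh hg x)
  · intro f hf g hg
    have hfi := HL_inv_mem hL hf
    have hgi := HL_inv_mem hL hg
    have hdnn := HL_dHL_nonneg hL hf hg
    refine ciSup_le fun x => ?_
    have hx : (0:ℝ) < 1 + ‖x‖ := by positivity
    set u := Function.invFun f x with hu
    set v := Function.invFun g x with hv
    have hfu : f u = x := Function.rightInverse_invFun hf.1.2 x
    have hgv : g v = x := Function.rightInverse_invFun hg.1.2 x
    -- bound on ‖v‖
    have hv0 : Function.invFun g (g 0) = (0 : Rn n) := Function.leftInverse_invFun hg.1.1 0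
    have hvnorm : ‖v‖ ≤ L * (‖x‖ + ‖g 0‖) := by
      have h1 := (hgi.2 x (g 0)).2
      rw [hv0] at h1
      have h2 : dist x (g 0) ≤ ‖x‖ + ‖g 0‖ := by
        calc dist x (g 0) ≤ dist x 0 + dist 0 (g 0) := dist_triangle _ _ _
          _ = ‖x‖ + ‖g 0‖ := by rw [dist_zero_right, dist_zero_left]
      calc ‖v‖ = dist v 0 := (dist_zero_right v).symm
        _ ≤ L * dist x (g 0) := h1
        _ ≤ L * (‖x‖ + ‖g 0‖) := mul_le_mul_of_nonneg_left h2 hL.le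
    -- main bound
    have h3 : dist u v ≤ L * dist (f v) (g v) := by
      have h := (hf.2 u v).1
      rw [hfu, ← hgv] at h
      calc dist u v = L * (L⁻¹ * dist u v) := by field_simp
        _ ≤ L * dist (g v) (f v) := mul_le_mul_of_nonneg_left h hL.le
        _ = L * dist (f v) (g v) := by rw [dist_comm]
    have h4 : dist (f v) (g v) ≤ dHL f g * (1 + ‖v‖) := by
      have := HL_le_dHL hL hf hg v
      rwa [div_le_iff₀ (by positivity)] at this
    rw [div_le_iff₀ hx]
    have hg0 : (0:ℝ) ≤ ‖g 0‖ := norm_nonneg _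
    have hxn : (0:ℝ) ≤ ‖x‖ := norm_nonneg _
    have key : (1:ℝ) + ‖v‖ ≤ (1 + L + L * ‖g 0‖) * (1 + ‖x‖) := by nlinarith [mul_nonneg hL.le hxn, mul_nonneg (mul_nonneg hL.le hg0) hxn]
    calc dist u v ≤ L * (dHL f g * (1 + ‖v‖)) :=
          le_trans h3 (mul_le_mul_of_nonneg_left h4 hL.le)
      _ ≤ L * (dHL f g * ((1 + L + L * ‖g 0‖) * (1 + ‖x‖))) := by gcongr
      _ = L * (1 + L + L * ‖g 0‖) * dHL f g * (1 + ‖x‖) := by ring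
end
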